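/- Let a, b, c, d be affinely independent points of EuclideanSpace ℝ (Fin 3). Then it is not the case that both ∠ b d c + ∠ a d b > π and ∠ d b c + ∠ a b d > π hold (i.e., face B=cda cannot fail at d while face D=abc fails at b). -/

import Mathlib

open EuclideanGeometry Real

lemma not_collinear_sub (a b c d : EuclideanSpace ℝ (Fin 3))
    (h : AffineIndependent ℝ ![a, b, c, d]) (i j k : Fin 4)
    (hij : i ≠ j) (hik : i ≠ k) (hjk : j ≠ k) :
    ¬ Collinear ℝ ({![a,b,c,d] i, ![a,b,c,d] j, ![a,b,c,d] k} :
      Set (EuclideanSpace ℝ (Fin 3))) := by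
  have hinj : Function.Injective ![i, j, k] := by
    intro x y hxy
    fin_cases x <;> fin_cases y <;> simp_all
  have h3 := h.comp_embedding ⟨![i, j, k], hinj⟩
  have heq : (![a,b,c,d] ∘ (⟨![i,j,k], hinj⟩ : Fin 3 ↪ Fin 4)) =
      ![![a,b,c,d] i, ![a,b,c,d] j, ![a,b,c,d] k] := by
    ext x : 1; fin_cases x <;> rfl
  rw [heq] at h3
  exact affineIndependent_iff_not_collinear_set.mp h3

lemma two_angles_lt_pi {x y z : EuclideanSpace ℝ (Fin 3)}
    (h : ¬ Collinear ℝ ({x, y, z} : Set (EuclideanSpace ℝ (Fin 3)))) :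
    ∠ x y z + ∠ y z x < π := by
  have hyx : y ≠ x := by
    rintro rfl
    exact h ((collinear_pair ℝ y z).subset (by intro p hp; simp at hp ⊢; tauto))
  have hzx : z ≠ x := by
    rintro rfl
    exact h ((collinear_pair ℝ z y).subset (by intro p hp; simp at hp ⊢; tauto))
  have hsum := EuclideanGeometry.angle_add_angle_add_angle_eq_pi (p₁ := x) z hyx
  have hpos : 0 < ∠ z x y := by
    apply EuclideanGeometry.angle_pos_of_not_collinear
    intro hc
    exact h (hc.subset (by intro p hp; simp at hp ⊢; tauto))
  linarith

/-- Face `B = cda` cannot fail at `d` while face `D = abc` fails at `b`. -/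
theorem not_opposite_failures_bd
    (a b c d : EuclideanSpace ℝ (Fin 3))
    (h : AffineIndependent ℝ ![a, b, c, d]) :
    ¬ (∠ b d c + ∠ a d b > π ∧ ∠ d b c + ∠ a b d > π) := by
  rintro ⟨h1, h2⟩
  have habd := not_collinear_sub a b c d h 0 1 3 (by decide) (by decide) (by decide)
  have hcdb := not_collinear_sub a b c d h 2 3 1 (by decide) (by decide) (by decide)
  simp only [Matrix.cons_val_zero, Matrix.cons_val_one, Matrix.head_cons,
    Matrix.cons_val_three, Matrix.cons_val_two, Matrix.tail_cons, Matrix.head_fin_const] at habd hcdb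
  -- triangle abd: ∠ a b d + ∠ b d a < π
  have t1 := two_angles_lt_pi habd
  -- triangle cdb: ∠ c d b + ∠ d b c < π
  have t2 := two_angles_lt_pi hcdb
  rw [EuclideanGeometry.angle_comm b d a] at t1
  rw [EuclideanGeometry.angle_comm c d b] at t2
  linarith
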